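/- Let p ∈ (1,∞) and p' = p/(p−1). There exist constants c, C > 0 depending only on p such that for all δ ≥ 0 and all t ≥ 0 the convex conjugate of φ satisfies c·(δ^{p−1} + t)^{p'−2} t² ≤ φ*(t) ≤ C·(δ^{p−1} + t)^{p'−2} t². Moreover there exists K depending only on p such that φ*(2t) ≤ K·φ*(t) for all δ ≥ 0 and t ≥ 0 (with Δ₂(φ*) ≤ c·2^{max{2,p'}}). -/

import Mathlib

open Real Set


/-- The N-function `φ = φ_{p,δ}`, `φ(t) = ∫₀ᵗ (δ+s)^(p-2)·s ds`. -/
noncomputable def phiFun (p δ t : ℝ) : ℝ := ∫ s in (0:ℝ)..t, (δ + s) ^ (p - 2) * s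

/-- The convex conjugate of an N-function: `ψ*(s) = sup_{t ≥ 0} (s·t − ψ(t))`. -/
noncomputable def conjFun (ψ : ℝ → ℝ) (s : ℝ) : ℝ :=
  sSup ((fun t => s * t - ψ t) '' Set.Ici 0)

lemma prod_form {p δ z : ℝ} (h : 0 < δ + z) :
    (δ + z) ^ (p - 2) * z = (δ + z) ^ (p - 1) * (z / (δ + z)) := by
  have : (δ + z) ^ (p - 1) = (δ + z) ^ (p - 2) * (δ + z) := by
    rw [← Real.rpow_add_one h.ne' (p - 2)]; ring_nf
  rw [this]; field_simp

lemma hmono {p δ : ℝ} (hp : 1 < p) (hδ : 0 ≤ δ) :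
    MonotoneOn (fun s => (δ + s) ^ (p - 2) * s) (Set.Ici 0) := by
  intro x hx y hy hxy
  simp only [Set.mem_Ici] at hx hy
  by_cases hxd : 0 < δ + x
  · have hyd : 0 < δ + y := by linarith
    simp only
    rw [prod_form hxd, prod_form hyd]
    apply mul_le_mul
    · exact Real.rpow_le_rpow (by linarith) (by linarith) (by linarith)
    · rw [div_le_div_iff₀ hxd hyd]; nlinarith
    · positivity
    · positivity
  · have hx0 : x = 0 := by nlinarith [add_nonneg hδ hx]
    simp only [hx0, mul_zero]
    positivity

lemma integrand_intble {p δ x y : ℝ} (hp : 1 < p) (hδ : 0 ≤ δ) (hx : 0 ≤ x) (hy : 0 ≤ y) :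
    IntervalIntegrable (fun s => (δ + s) ^ (p - 2) * s) MeasureTheory.volume x y := by
  apply MonotoneOn.intervalIntegrable
  apply (hmono hp hδ).mono
  intro z hz
  rcases Set.mem_uIcc.mp hz with h | h
  · exact le_trans hx h.1
  · exact le_trans hy h.1

lemma phi_nonneg {p δ t : ℝ} (hδ : 0 ≤ δ) (ht : 0 ≤ t) : 0 ≤ phiFun p δ t := by
  apply intervalIntegral.integral_nonneg ht
  intro s hs
  have : 0 ≤ s := hs.1
  positivity

lemma phi_upper {p δ t : ℝ} (hp : 1 < p) (hδ : 0 ≤ δ) (ht : 0 ≤ t) :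
    phiFun p δ t ≤ (δ + t) ^ (p - 2) * t ^ 2 := by
  have h1 : phiFun p δ t ≤ ∫ _ in (0:ℝ)..t, (δ + t) ^ (p - 2) * t := by
    apply intervalIntegral.integral_mono_on ht (integrand_intble hp hδ le_rfl ht)
      intervalIntegrable_const
    intro x hx
    exact hmono hp hδ hx.1 ht hx.2
  rw [intervalIntegral.integral_const, smul_eq_mul] at h1
  calc phiFun p δ t ≤ (t - 0) * ((δ + t) ^ (p - 2) * t) := h1
    _ = (δ + t) ^ (p - 2) * t ^ 2 := by ring

lemma phi_lower {p δ t : ℝ} (hp : 1 < p) (hδ : 0 ≤ δ) (ht : 0 ≤ t) :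
    min 1 (2 ^ (2 - p)) / 4 * ((δ + t) ^ (p - 2) * t ^ 2) ≤ phiFun p δ t := by
  rcases eq_or_lt_of_le ht with h | h
  · simp [← h, phiFun]
  have ht2 : (0:ℝ) ≤ t / 2 := by linarith
  have hsplit : phiFun p δ t =
      (∫ s in (0:ℝ)..(t/2), (δ + s) ^ (p - 2) * s) +
      ∫ s in (t/2:ℝ)..t, (δ + s) ^ (p - 2) * s :=
    (intervalIntegral.integral_add_adjacent_intervals
      (integrand_intble hp hδ le_rfl ht2) (integrand_intble hp hδ ht2 ht)).symm
  have h1 : (0:ℝ) ≤ ∫ s in (0:ℝ)..(t/2), (δ + s) ^ (p - 2) * s := by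
    apply intervalIntegral.integral_nonneg ht2
    intro s hs; have : 0 ≤ s := hs.1; positivity
  have h2 : (t/2) * ((δ + t/2) ^ (p - 2) * (t/2)) ≤
      ∫ s in (t/2:ℝ)..t, (δ + s) ^ (p - 2) * s := by
    have := intervalIntegral.integral_mono_on (by linarith : t/2 ≤ t)
      intervalIntegrable_const (integrand_intble hp hδ ht2 ht)
      (fun x hx => hmono hp hδ ht2 (le_trans ht2 hx.1) hx.1 :
        ∀ x ∈ Set.Icc (t/2) t, (δ + t/2) ^ (p - 2) * (t/2) ≤ (δ + x) ^ (p - 2) * x)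
    rw [intervalIntegral.integral_const, smul_eq_mul] at this
    calc (t/2) * ((δ + t/2) ^ (p - 2) * (t/2))
        = (t - t/2) * ((δ + t/2) ^ (p - 2) * (t/2)) := by ring
      _ ≤ _ := this
  have hkey : min 1 (2 ^ (2 - p)) * (δ + t) ^ (p - 2) ≤ (δ + t/2) ^ (p - 2) := by
    rcases le_or_gt p 2 with hp2 | hp2
    · calc min 1 (2 ^ (2 - p)) * (δ + t) ^ (p - 2)
          ≤ 1 * (δ + t) ^ (p - 2) := by
            apply mul_le_mul_of_nonneg_right (min_le_left _ _) (by positivity)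
        _ = (δ + t) ^ (p - 2) := one_mul _
        _ ≤ (δ + t/2) ^ (p - 2) :=
            Real.rpow_le_rpow_of_nonpos (by linarith) (by linarith) (by linarith)
    · have hbase : (δ + t) / 2 ≤ δ + t/2 := by linarith
      calc min 1 (2 ^ (2 - p)) * (δ + t) ^ (p - 2)
          ≤ 2 ^ (2 - p) * (δ + t) ^ (p - 2) := by
            apply mul_le_mul_of_nonneg_right (min_le_right _ _) (by positivity)
        _ = ((δ + t) / 2) ^ (p - 2) := by
            rw [Real.div_rpow (by linarith) (by norm_num),
              show (2:ℝ) - p = -(p - 2) by ring, Real.rpow_neg (by norm_num : (0:ℝ) ≤ 2)]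
            field_simp
        _ ≤ (δ + t/2) ^ (p - 2) :=
            Real.rpow_le_rpow (by positivity) hbase (by linarith)
  calc min 1 (2 ^ (2 - p)) / 4 * ((δ + t) ^ (p - 2) * t ^ 2)
      = (min 1 (2 ^ (2 - p)) * (δ + t) ^ (p - 2)) * (t/2) * (t/2) := by ring
    _ ≤ (δ + t/2) ^ (p - 2) * (t/2) * (t/2) := by
        apply mul_le_mul_of_nonneg_right (mul_le_mul_of_nonneg_right hkey (by linarith)) (by linarith)
    _ = (t/2) * ((δ + t/2) ^ (p - 2) * (t/2)) := by ring
    _ ≤ ∫ s in (t/2:ℝ)..t, (δ + s) ^ (p - 2) * s := h2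
    _ ≤ phiFun p δ t := by rw [hsplit]; linarith
lemma rpow_between {x y B q : ℝ} (hx : 0 < x) (hxB : x ≤ B) (hBy : B ≤ y) :
    min (x ^ q) (y ^ q) ≤ B ^ q ∧ B ^ q ≤ max (x ^ q) (y ^ q) := by
  rcases le_or_gt 0 q with hq | hq
  · exact ⟨(min_le_left _ _).trans (Real.rpow_le_rpow hx.le hxB hq),
      (Real.rpow_le_rpow (by linarith) hBy hq).trans (le_max_right _ _)⟩
  · exact ⟨(min_le_right _ _).trans (Real.rpow_le_rpow_of_nonpos (by linarith) hBy hq.le),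
      (Real.rpow_le_rpow_of_nonpos hx hxB hq.le).trans (le_max_left _ _)⟩

lemma base_comp {p δ s a t0 : ℝ} (hp : 1 < p) (hδ : 0 ≤ δ) (hs : 0 < s)
    (ha : a = δ ^ (p - 1)) (ht0 : t0 = (a + s) ^ ((2 - p)/(p - 1)) * s) :
    min 1 (2 ^ (2 - p)) / 2 * (a + s) ≤ (δ + t0) ^ (p - 1) ∧
      (δ + t0) ^ (p - 1) ≤ 2 ^ p * (a + s) := by
  have hp1 : 0 < p - 1 := by linarith
  have ha0 : 0 ≤ a := ha ▸ Real.rpow_nonneg hδ _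
  have has : 0 < a + s := by linarith
  have ht0pos : 0 < t0 := ht0 ▸ by positivity
  have ht0pow : t0 ^ (p - 1) = (a + s) ^ (2 - p) * s ^ (p - 1) := by
    rw [ht0, Real.mul_rpow (Real.rpow_nonneg has.le _) hs.le,
      ← Real.rpow_mul has.le]
    congr 2
    field_simp
  have hδpow : δ ^ (p - 1) ≤ (δ + t0) ^ (p - 1) :=
    Real.rpow_le_rpow hδ (by linarith) hp1.le
  have ht0pow_le : t0 ^ (p - 1) ≤ (δ + t0) ^ (p - 1) :=
    Real.rpow_le_rpow ht0pos.le (by linarith) hp1.le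
  constructor
  · -- lower bound
    have hmin1 : min (1:ℝ) (2 ^ (2 - p)) ≤ 1 := min_le_left _ _
    rcases le_or_gt s a with hcase | hcase
    · -- a ≥ (a+s)/2
      have : min 1 (2 ^ (2 - p)) / 2 * (a + s) ≤ a := by
        nlinarith [Real.rpow_pos_of_pos two_pos (2 - p), (min_le_left (1:ℝ) ((2:ℝ) ^ (2 - p))),
          lt_min (one_pos (α:=ℝ)) (Real.rpow_pos_of_pos two_pos (2 - p))]
      exact this.trans (ha ▸ hδpow)
    · -- t0^(p-1) ≥ min * s ≥ min*(a+s)/2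
      have key : min (1:ℝ) (2 ^ (2 - p)) * s ≤ t0 ^ (p - 1) := by
        rw [ht0pow]
        rcases le_or_gt p 2 with hp2 | hp2
        · have h1 : s ^ (2 - p) ≤ (a + s) ^ (2 - p) :=
            Real.rpow_le_rpow hs.le (by linarith) (by linarith)
          have h2 : s ^ (2 - p) * s ^ (p - 1) = s := by
            rw [← Real.rpow_add hs]; norm_num
          calc min 1 (2 ^ (2 - p)) * s ≤ 1 * s := by
                apply mul_le_mul_of_nonneg_right hmin1 hs.le
            _ = s ^ (2 - p) * s ^ (p - 1) := by rw [h2, one_mul]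
            _ ≤ (a + s) ^ (2 - p) * s ^ (p - 1) :=
                mul_le_mul_of_nonneg_right h1 (Real.rpow_nonneg hs.le _)
        · have h1 : (2 * s) ^ (2 - p) ≤ (a + s) ^ (2 - p) :=
            Real.rpow_le_rpow_of_nonpos has (by linarith) (by linarith)
          have h2 : (2 * s) ^ (2 - p) * s ^ (p - 1) = 2 ^ (2 - p) * s := by
            rw [Real.mul_rpow (by norm_num) hs.le, mul_assoc, ← Real.rpow_add hs]
            norm_num
          calc min 1 (2 ^ (2 - p)) * s ≤ 2 ^ (2 - p) * s := by
                apply mul_le_mul_of_nonneg_right (min_le_right _ _) hs.le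
            _ = (2 * s) ^ (2 - p) * s ^ (p - 1) := h2.symm
            _ ≤ (a + s) ^ (2 - p) * s ^ (p - 1) :=
                mul_le_mul_of_nonneg_right h1 (Real.rpow_nonneg hs.le _)
      have : min 1 (2 ^ (2 - p)) / 2 * (a + s) ≤ min 1 (2 ^ (2 - p)) * s := by
        have hminpos : 0 < min (1:ℝ) (2 ^ (2 - p)) :=
          lt_min one_pos (Real.rpow_pos_of_pos two_pos _)
        nlinarith
      exact this.trans (key.trans ht0pow_le)
  · -- upper bound
    have ht0as : t0 ^ (p - 1) ≤ a + s := by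
      rw [ht0pow]
      have h1 : s ^ (p - 1) ≤ (a + s) ^ (p - 1) :=
        Real.rpow_le_rpow hs.le (by linarith) hp1.le
      calc (a + s) ^ (2 - p) * s ^ (p - 1) ≤ (a + s) ^ (2 - p) * (a + s) ^ (p - 1) :=
            mul_le_mul_of_nonneg_left h1 (Real.rpow_nonneg has.le _)
        _ = a + s := by rw [← Real.rpow_add has]; norm_num
    have hsum : δ + t0 ≤ 2 * max δ t0 := by
      rcases le_total δ t0 with h | h
      · rw [max_eq_right h]; linarith
      · rw [max_eq_left h]; linarith
    have hmaxpow : (max δ t0) ^ (p - 1) ≤ a + (a + s) := by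
      rcases le_total δ t0 with h | h
      · rw [max_eq_right h]; linarith
      · rw [max_eq_left h]; rw [ha]; linarith [Real.rpow_nonneg hs.le (p-1), ht0pow,
          Real.rpow_nonneg has.le (2-p), ha ▸ (le_refl a)]
    calc (δ + t0) ^ (p - 1) ≤ (2 * max δ t0) ^ (p - 1) :=
          Real.rpow_le_rpow (by positivity) hsum hp1.le
      _ = 2 ^ (p - 1) * (max δ t0) ^ (p - 1) :=
          Real.mul_rpow (by norm_num) (le_max_of_le_right ht0pos.le)
      _ ≤ 2 ^ (p - 1) * (a + (a + s)) :=
          mul_le_mul_of_nonneg_left hmaxpow (by positivity)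
      _ ≤ 2 ^ (p - 1) * (2 * (a + s)) := by
          apply mul_le_mul_of_nonneg_left _ (by positivity)
          linarith
      _ = 2 ^ p * (a + s) := by
          rw [show p = (p - 1) + 1 by ring, Real.rpow_add two_pos, Real.rpow_one]
          ring
noncomputable def cA (p : ℝ) : ℝ := min 1 (2 ^ (2 - p)) / 2
noncomputable def CA (p : ℝ) : ℝ := (2:ℝ) ^ p

lemma cA_pos {p : ℝ} : 0 < cA p := by
  unfold cA
  have : (0:ℝ) < min 1 (2 ^ (2 - p)) := lt_min one_pos (Real.rpow_pos_of_pos two_pos _)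
  linarith

lemma CA_pos {p : ℝ} : 0 < CA p := Real.rpow_pos_of_pos two_pos _

lemma htilde_scale {p δ s a t0 lam : ℝ} (hp : 1 < p) (hδ : 0 ≤ δ) (hs : 0 < s)
    (ha : a = δ ^ (p - 1)) (ht0 : t0 = (a + s) ^ ((2 - p)/(p - 1)) * s) (hlam : 0 < lam) :
    min ((cA p * min 1 lam ^ (p - 1)) ^ ((p - 2)/(p - 1)))
        ((CA p * max 1 lam ^ (p - 1)) ^ ((p - 2)/(p - 1))) * (lam * s)
      ≤ (δ + lam * t0) ^ (p - 2) * (lam * t0) ∧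
    (δ + lam * t0) ^ (p - 2) * (lam * t0)
      ≤ max ((cA p * min 1 lam ^ (p - 1)) ^ ((p - 2)/(p - 1)))
          ((CA p * max 1 lam ^ (p - 1)) ^ ((p - 2)/(p - 1))) * (lam * s) := by
  have hp1 : 0 < p - 1 := by linarith
  have ha0 : 0 ≤ a := ha ▸ Real.rpow_nonneg hδ _
  have has : 0 < a + s := by linarith
  have ht0pos : 0 < t0 := ht0 ▸ by positivity
  obtain ⟨hbc1, hbc2⟩ := base_comp hp hδ hs ha ht0
  have hminlam : 0 < min 1 lam := lt_min one_pos hlam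
  have hmaxlam : 0 < max 1 lam := lt_max_of_lt_left one_pos
  -- sandwich for δ + lam * t0
  have hlow : min 1 lam * (δ + t0) ≤ δ + lam * t0 := by
    have h1 : min 1 lam ≤ 1 := min_le_left _ _
    have h2 : min 1 lam ≤ lam := min_le_right _ _
    nlinarith
  have hhigh : δ + lam * t0 ≤ max 1 lam * (δ + t0) := by
    have h1 : (1:ℝ) ≤ max 1 lam := le_max_left _ _
    have h2 : lam ≤ max 1 lam := le_max_right _ _
    nlinarith
  have hXpos : 0 < cA p * min 1 lam ^ (p - 1) * (a + s) := by
    have := cA_pos (p := p); positivity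
  -- bounds on (δ + lam*t0)^(p-1)
  have hB1 : cA p * min 1 lam ^ (p - 1) * (a + s) ≤ (δ + lam * t0) ^ (p - 1) := by
    calc cA p * min 1 lam ^ (p - 1) * (a + s)
        = min 1 lam ^ (p - 1) * (cA p * (a + s)) := by ring
      _ ≤ min 1 lam ^ (p - 1) * (δ + t0) ^ (p - 1) := by
          apply mul_le_mul_of_nonneg_left _ (Real.rpow_nonneg hminlam.le _)
          calc cA p * (a + s) = min 1 (2 ^ (2 - p)) / 2 * (a + s) := by rw [cA]
            _ ≤ (δ + t0) ^ (p - 1) := hbc1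
      _ = (min 1 lam * (δ + t0)) ^ (p - 1) :=
          (Real.mul_rpow hminlam.le (by linarith)).symm
      _ ≤ (δ + lam * t0) ^ (p - 1) :=
          Real.rpow_le_rpow (by positivity) hlow hp1.le
  have hB2 : (δ + lam * t0) ^ (p - 1) ≤ CA p * max 1 lam ^ (p - 1) * (a + s) := by
    calc (δ + lam * t0) ^ (p - 1)
        ≤ (max 1 lam * (δ + t0)) ^ (p - 1) :=
          Real.rpow_le_rpow (by positivity) hhigh hp1.le
      _ = max 1 lam ^ (p - 1) * (δ + t0) ^ (p - 1) :=
          Real.mul_rpow hmaxlam.le (by linarith)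
      _ ≤ max 1 lam ^ (p - 1) * (2 ^ p * (a + s)) := by
          apply mul_le_mul_of_nonneg_left hbc2 (Real.rpow_nonneg hmaxlam.le _)
      _ = CA p * max 1 lam ^ (p - 1) * (a + s) := by rw [CA]; ring
  -- (δ + lam*t0)^(p-2) = ((δ+lam*t0)^(p-1))^((p-2)/(p-1))
  have hbpos : 0 < δ + lam * t0 := by positivity
  have hpowpow : (δ + lam * t0) ^ (p - 2) =
      ((δ + lam * t0) ^ (p - 1)) ^ ((p - 2)/(p - 1)) := by
    rw [← Real.rpow_mul hbpos.le]
    congr 1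
    field_simp
  obtain ⟨hq1, hq2⟩ := rpow_between (q := (p - 2)/(p - 1)) hXpos hB1 hB2
  -- key identity : (a+s)^((p-2)/(p-1)) * t0 = s
  have hid : ∀ u : ℝ, u ^ ((p - 2)/(p - 1)) * t0 = u ^ ((p - 2)/(p - 1) + (2 - p)/(p - 1)) * s
      → True := fun _ _ => trivial
  have hkey : (a + s) ^ ((p - 2)/(p - 1)) * t0 = s := by
    rw [ht0, ← mul_assoc, ← Real.rpow_add has]
    have : (p - 2)/(p - 1) + (2 - p)/(p - 1) = 0 := by field_simp; ring
    rw [this, Real.rpow_zero, one_mul]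
  -- split mins/maxes : (x * (a+s))^q = x^q * (a+s)^q
  have hsplit1 : (cA p * min 1 lam ^ (p - 1) * (a + s)) ^ ((p - 2)/(p - 1)) =
      (cA p * min 1 lam ^ (p - 1)) ^ ((p - 2)/(p - 1)) * (a + s) ^ ((p - 2)/(p - 1)) := by
    rw [Real.mul_rpow (by have := cA_pos (p := p); positivity) has.le]
  have hsplit2 : (CA p * max 1 lam ^ (p - 1) * (a + s)) ^ ((p - 2)/(p - 1)) =
      (CA p * max 1 lam ^ (p - 1)) ^ ((p - 2)/(p - 1)) * (a + s) ^ ((p - 2)/(p - 1)) := by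
    rw [Real.mul_rpow (by have := CA_pos (p := p); positivity) has.le]
  rw [hsplit1, hsplit2] at hq1 hq2
  set q := (p - 2)/(p - 1) with hqdef
  set X := (cA p * min 1 lam ^ (p - 1)) ^ q with hX
  set Y := (CA p * max 1 lam ^ (p - 1)) ^ q with hY
  have hXq : 0 < X := Real.rpow_pos_of_pos (by have := cA_pos (p := p); positivity) _
  have hYq : 0 < Y := Real.rpow_pos_of_pos (by have := CA_pos (p := p); positivity) _
  have haspow : 0 < (a + s) ^ q := Real.rpow_pos_of_pos has _
  constructor
  · have e1 : min X Y * (a + s) ^ q * (lam * t0) = min X Y * (lam * s) := by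
      linear_combination (min X Y * lam) * hkey
    have e2 : min X Y * (a + s) ^ q = min (X * (a + s) ^ q) (Y * (a + s) ^ q) :=
      min_mul_of_nonneg _ _ haspow.le
    rw [← e1, e2, hpowpow]
    exact mul_le_mul_of_nonneg_right hq1 (by positivity)
  · have e1 : max X Y * (a + s) ^ q * (lam * t0) = max X Y * (lam * s) := by
      linear_combination (max X Y * lam) * hkey
    have e2 : max X Y * (a + s) ^ q = max (X * (a + s) ^ q) (Y * (a + s) ^ q) :=
      max_mul_of_nonneg _ _ haspow.le
    rw [← e1, e2, hpowpow]
    exact mul_le_mul_of_nonneg_right hq2 (by positivity)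
noncomputable def kap (p : ℝ) : ℝ := min 1 (2 ^ (2 - p)) / 4
noncomputable def muC (p : ℝ) : ℝ :=
  min ((cA p) ^ ((p - 2)/(p - 1))) ((CA p) ^ ((p - 2)/(p - 1)))
noncomputable def Mbig (p : ℝ) : ℝ :=
  max 1 ((1/(kap p * muC p)) ^ (1/(min 1 (p - 1))))
noncomputable def KqC (p : ℝ) : ℝ :=
  (cA p) ^ ((p - 2)/(p - 1)) + (CA p) ^ ((p - 2)/(p - 1))
noncomputable def thet (p : ℝ) : ℝ := min 1 ((1/(2 * KqC p)) ^ (1/(min p 2 - 1)))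

lemma kap_pos {p : ℝ} : 0 < kap p := by
  unfold kap
  have : (0:ℝ) < min 1 (2 ^ (2 - p)) := lt_min one_pos (Real.rpow_pos_of_pos two_pos _)
  linarith

lemma muC_pos {p : ℝ} : 0 < muC p :=
  lt_min (Real.rpow_pos_of_pos cA_pos _) (Real.rpow_pos_of_pos CA_pos _)

lemma Mbig_pos {p : ℝ} : 0 < Mbig p := lt_max_of_lt_left one_pos

lemma Mbig_ge_one {p : ℝ} : 1 ≤ Mbig p := le_max_left _ _

lemma KqC_pos {p : ℝ} : 0 < KqC p :=
  add_pos (Real.rpow_pos_of_pos cA_pos _) (Real.rpow_pos_of_pos CA_pos _)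

lemma thet_pos {p : ℝ} : 0 < thet p :=
  lt_min one_pos (Real.rpow_pos_of_pos (by have := KqC_pos (p := p); positivity) _)

lemma thet_le_one {p : ℝ} : thet p ≤ 1 := min_le_left _ _

/-- Every element of the conjugate's defining set is bounded by `Mbig p * (s * t0)`. -/
lemma conj_bound_all {p δ s t : ℝ} (hp : 1 < p) (hδ : 0 ≤ δ) (hs : 0 < s) (ht : 0 ≤ t) :
    s * t - phiFun p δ t ≤
      Mbig p * (s * ((δ ^ (p - 1) + s) ^ ((2 - p)/(p - 1)) * s)) := by
  have hp1 : 0 < p - 1 := by linarith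
  set a := δ ^ (p - 1) with ha
  set t0 := (a + s) ^ ((2 - p)/(p - 1)) * s with ht0
  have ha0 : 0 ≤ a := Real.rpow_nonneg hδ _
  have has : 0 < a + s := by linarith
  have ht0pos : 0 < t0 := by rw [ht0]; positivity
  rcases le_or_gt t (Mbig p * t0) with hcase | hcase
  · have h1 : s * t ≤ s * (Mbig p * t0) := mul_le_mul_of_nonneg_left hcase hs.le
    have h2 : 0 ≤ phiFun p δ t := phi_nonneg hδ ht
    calc s * t - phiFun p δ t ≤ s * t := by linarith
      _ ≤ s * (Mbig p * t0) := h1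
      _ = Mbig p * (s * t0) := by ring
  · -- t large : s*t ≤ φ(t)
    have hM1 : (1:ℝ) ≤ Mbig p := Mbig_ge_one
    have hMpos : 0 < Mbig p := Mbig_pos
    obtain ⟨hsc, -⟩ := htilde_scale (lam := Mbig p) hp hδ hs ha ht0 hMpos
    have hminM : min (1:ℝ) (Mbig p) = 1 := min_eq_left hM1
    have hmaxM : max (1:ℝ) (Mbig p) = Mbig p := max_eq_right hM1
    rw [hminM, hmaxM, Real.one_rpow, mul_one] at hsc
    set q := (p - 2)/(p - 1) with hq
    -- min (cA^q) ((CA * M^(p-1))^q) ≥ muC p * Mbig p^(p-2) is not quite it; do the μ·M^r bound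
    have hYsplit : (CA p * Mbig p ^ (p - 1)) ^ q = (CA p) ^ q * Mbig p ^ (p - 2) := by
      rw [Real.mul_rpow CA_pos.le (Real.rpow_nonneg hMpos.le _),
        ← Real.rpow_mul hMpos.le]
      congr 2
      rw [hq]
      field_simp
    have hr : 0 < min 1 (p - 1) := lt_min one_pos hp1
    have hMr : 1 / (kap p * muC p) ≤ Mbig p ^ (min 1 (p - 1)) := by
      have h1 : (1/(kap p * muC p)) ^ (1/(min 1 (p - 1))) ≤ Mbig p := le_max_right _ _
      have h2 : ((1/(kap p * muC p)) ^ (1/(min 1 (p - 1)))) ^ (min 1 (p - 1)) ≤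
          Mbig p ^ (min 1 (p - 1)) :=
        Real.rpow_le_rpow (Real.rpow_nonneg (by have h1 := kap_pos (p := p); have h2 := muC_pos (p := p); positivity) _)
          h1 hr.le
      rwa [← Real.rpow_mul (by have h1 := kap_pos (p := p); have h2 := muC_pos (p := p); positivity),
        one_div_mul_cancel hr.ne', Real.rpow_one] at h2
    -- min X Y * (M * s) ≥ muC * M^r * s ≥ s / kap
    have hmin_ge : muC p * Mbig p ^ (min 1 (p - 1)) * s ≤
        min ((cA p) ^ q) ((CA p * Mbig p ^ (p - 1)) ^ q) * (Mbig p * s) := by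
      have hMr1 : Mbig p ^ (min 1 (p - 1)) ≤ Mbig p := by
        calc Mbig p ^ (min 1 (p - 1)) ≤ Mbig p ^ (1:ℝ) :=
            Real.rpow_le_rpow_of_exponent_le hM1 (min_le_left _ _)
          _ = Mbig p := Real.rpow_one _
      have hMr2 : Mbig p ^ (min 1 (p - 1)) ≤ Mbig p ^ (p - 1) :=
        Real.rpow_le_rpow_of_exponent_le hM1 (min_le_right _ _)
      have hc1 : muC p * Mbig p ^ (min 1 (p - 1)) ≤ (cA p) ^ q * Mbig p := by
        apply mul_le_mul (min_le_left _ _) hMr1 (Real.rpow_nonneg hMpos.le _)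
          (Real.rpow_nonneg cA_pos.le _)
      have hc2 : muC p * Mbig p ^ (min 1 (p - 1)) ≤ (CA p * Mbig p ^ (p - 1)) ^ q * Mbig p := by
        rw [hYsplit]
        have : Mbig p ^ (min 1 (p - 1)) ≤ Mbig p ^ (p - 2) * Mbig p := by
          rw [← Real.rpow_add_one hMpos.ne' (p - 2)]
          calc Mbig p ^ (min 1 (p - 1)) ≤ Mbig p ^ (p - 1) := hMr2
            _ = Mbig p ^ (p - 2 + 1) := by congr 1; ring
        calc muC p * Mbig p ^ (min 1 (p - 1)) ≤ (CA p) ^ q * (Mbig p ^ (p - 2) * Mbig p) := by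
              apply mul_le_mul (min_le_right _ _) this (Real.rpow_nonneg hMpos.le _)
                (Real.rpow_nonneg CA_pos.le _)
          _ = (CA p) ^ q * Mbig p ^ (p - 2) * Mbig p := by ring
      have : muC p * Mbig p ^ (min 1 (p - 1)) ≤
          min ((cA p) ^ q) ((CA p * Mbig p ^ (p - 1)) ^ q) * Mbig p := by
        rw [min_mul_of_nonneg _ _ hMpos.le]
        exact le_min hc1 hc2
      calc muC p * Mbig p ^ (min 1 (p - 1)) * s ≤
          min ((cA p) ^ q) ((CA p * Mbig p ^ (p - 1)) ^ q) * Mbig p * s :=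
            mul_le_mul_of_nonneg_right this hs.le
        _ = _ := by ring
    have hs_le : s / kap p ≤ muC p * Mbig p ^ (min 1 (p - 1)) * s := by
      have hm := (muC_pos (p := p)).ne'
      have hk := (kap_pos (p := p)).ne'
      have h1 : 1 / kap p ≤ muC p * Mbig p ^ (min 1 (p - 1)) := by
        have h2 := mul_le_mul_of_nonneg_left hMr (muC_pos (p := p)).le
        rw [show muC p * (1/(kap p * muC p)) = 1 / kap p from by field_simp] at h2
        exact h2
      calc s / kap p = (1 / kap p) * s := by ring
        _ ≤ muC p * Mbig p ^ (min 1 (p - 1)) * s := mul_le_mul_of_nonneg_right h1 hs.le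
    -- now chain
    have hmono_ht : (δ + Mbig p * t0) ^ (p - 2) * (Mbig p * t0) ≤ (δ + t) ^ (p - 2) * t :=
      hmono hp hδ (Set.mem_Ici.mpr (by positivity)) (Set.mem_Ici.mpr (le_trans (by positivity) hcase.le)) hcase.le
    have hphi_ge : s * t ≤ phiFun p δ t := by
      have h1 : s / kap p ≤ (δ + t) ^ (p - 2) * t :=
        le_trans hs_le (le_trans hmin_ge (le_trans hsc hmono_ht))
      have h2 := phi_lower hp hδ (le_trans (by positivity) hcase.le : (0:ℝ) ≤ t)
      have hk := kap_pos (p := p)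
      have ht' : 0 < t := lt_of_le_of_lt (by positivity) hcase
      calc s * t = (s / kap p) * kap p * t := by field_simp
        _ ≤ ((δ + t) ^ (p - 2) * t) * kap p * t := by
            apply mul_le_mul_of_nonneg_right (mul_le_mul_of_nonneg_right h1 hk.le) ht'.le
        _ = min 1 (2 ^ (2 - p)) / 4 * ((δ + t) ^ (p - 2) * t ^ 2) := by rw [kap]; ring
        _ ≤ phiFun p δ t := h2
    have : 0 ≤ Mbig p * (s * t0) := by positivity
    linarith
lemma conj_upper {p δ s : ℝ} (hp : 1 < p) (hδ : 0 ≤ δ) (hs : 0 < s) :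
    conjFun (phiFun p δ) s ≤
      Mbig p * (s * ((δ ^ (p - 1) + s) ^ ((2 - p)/(p - 1)) * s)) := by
  apply Real.sSup_le
  · rintro x ⟨t, ht, rfl⟩
    exact conj_bound_all hp hδ hs ht
  · have h1 := Mbig_pos (p := p)
    have h2 : 0 ≤ (δ ^ (p - 1) + s) ^ ((2 - p)/(p - 1)) := Real.rpow_nonneg
      (by positivity) _
    positivity

lemma conj_lower {p δ s : ℝ} (hp : 1 < p) (hδ : 0 ≤ δ) (hs : 0 < s) :
    thet p / 2 * (s * ((δ ^ (p - 1) + s) ^ ((2 - p)/(p - 1)) * s)) ≤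
      conjFun (phiFun p δ) s := by
  have hp1 : 0 < p - 1 := by linarith
  set a := δ ^ (p - 1) with ha
  set t0 := (a + s) ^ ((2 - p)/(p - 1)) * s with ht0
  have ha0 : 0 ≤ a := Real.rpow_nonneg hδ _
  have has : 0 < a + s := by linarith
  have ht0pos : 0 < t0 := by rw [ht0]; positivity
  set θ := thet p with hθdef
  have hθ : 0 < θ := thet_pos
  have hθ1 : θ ≤ 1 := thet_le_one
  set q := (p - 2)/(p - 1) with hq
  have hkey : s * (θ * t0) - phiFun p δ (θ * t0) ≤ conjFun (phiFun p δ) s := by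
    apply le_csSup
    · refine ⟨Mbig p * (s * t0), ?_⟩
      rintro x ⟨t, ht, rfl⟩
      exact conj_bound_all hp hδ hs ht
    · exact ⟨θ * t0, Set.mem_Ici.mpr (by positivity), rfl⟩
  obtain ⟨-, hsc⟩ := htilde_scale (lam := θ) hp hδ hs ha ht0 hθ
  rw [min_eq_right hθ1, max_eq_left hθ1, Real.one_rpow, mul_one] at hsc
  -- hsc : (δ + θ*t0)^(p-2) * (θ*t0) ≤ max ((cA p * θ^(p-1))^q) ((CA p)^q) * (θ*s)
  have hXsplit : (cA p * θ ^ (p - 1)) ^ q = (cA p) ^ q * θ ^ (p - 2) := by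
    rw [Real.mul_rpow cA_pos.le (Real.rpow_nonneg hθ.le _), ← Real.rpow_mul hθ.le]
    congr 2
    rw [hq]
    field_simp
  have hA1 : (0:ℝ) ≤ (cA p) ^ q := Real.rpow_nonneg cA_pos.le _
  have hA2 : (0:ℝ) ≤ (CA p) ^ q := Real.rpow_nonneg CA_pos.le _
  have hθp2 : (0:ℝ) ≤ θ ^ (p - 2) := Real.rpow_nonneg hθ.le _
  have hmax_le : max ((cA p * θ ^ (p - 1)) ^ q) ((CA p) ^ q) ≤
      (cA p) ^ q * θ ^ (p - 2) + (CA p) ^ q := by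
    rw [hXsplit]
    apply max_le (by nlinarith) (by nlinarith)
  have hphi : phiFun p δ (θ * t0) ≤
      ((cA p) ^ q * θ ^ p + (CA p) ^ q * θ ^ (2:ℝ)) * (s * t0) := by
    have h1 : phiFun p δ (θ * t0) ≤ (δ + θ * t0) ^ (p - 2) * (θ * t0) ^ 2 :=
      phi_upper hp hδ (by positivity)
    have h2 : (δ + θ * t0) ^ (p - 2) * (θ * t0) ^ 2 =
        ((δ + θ * t0) ^ (p - 2) * (θ * t0)) * (θ * t0) := by ring
    have h3 : ((δ + θ * t0) ^ (p - 2) * (θ * t0)) * (θ * t0) ≤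
        (max ((cA p * θ ^ (p - 1)) ^ q) ((CA p) ^ q) * (θ * s)) * (θ * t0) :=
      mul_le_mul_of_nonneg_right hsc (by positivity)
    have h4 : (max ((cA p * θ ^ (p - 1)) ^ q) ((CA p) ^ q) * (θ * s)) * (θ * t0) ≤
        (((cA p) ^ q * θ ^ (p - 2) + (CA p) ^ q) * (θ * s)) * (θ * t0) := by
      apply mul_le_mul_of_nonneg_right _ (by positivity)
      exact mul_le_mul_of_nonneg_right hmax_le (by positivity)
    have hθθ : θ * θ = θ ^ (2:ℝ) := by
      rw [show (2:ℝ) = 1 + 1 by norm_num, Real.rpow_add hθ, Real.rpow_one]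
    have hθpp : θ ^ (p - 2) * (θ * θ) = θ ^ p := by
      rw [hθθ, ← Real.rpow_add hθ]
      congr 1
      ring
    have h5 : (((cA p) ^ q * θ ^ (p - 2) + (CA p) ^ q) * (θ * s)) * (θ * t0) =
        ((cA p) ^ q * (θ ^ (p - 2) * (θ * θ)) + (CA p) ^ q * (θ * θ)) * (s * t0) := by
      ring
    rw [h5, hθpp, hθθ] at h4
    linarith
  -- bound the coefficient by θ/2
  have hm : 1 < min p 2 := lt_min hp one_lt_two
  have hm1 : 0 < min p 2 - 1 := by linarith
  have hcoef : (cA p) ^ q * θ ^ p + (CA p) ^ q * θ ^ (2:ℝ) ≤ θ / 2 := by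
    have hθm1 : θ ^ p ≤ θ ^ (min p 2) :=
      Real.rpow_le_rpow_of_exponent_ge hθ hθ1 (min_le_left _ _)
    have hθm2 : θ ^ (2:ℝ) ≤ θ ^ (min p 2) :=
      Real.rpow_le_rpow_of_exponent_ge hθ hθ1 (min_le_right _ _)
    have h6 : (cA p) ^ q * θ ^ p + (CA p) ^ q * θ ^ (2:ℝ) ≤ KqC p * θ ^ (min p 2) := by
      rw [KqC]
      nlinarith [Real.rpow_nonneg hθ.le (min p 2)]
    have hKq := KqC_pos (p := p)
    have hθsm : θ ^ (min p 2 - 1) ≤ 1 / (2 * KqC p) := by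
      have h7 : θ ≤ (1/(2 * KqC p)) ^ (1/(min p 2 - 1)) := min_le_right _ _
      have h8 : θ ^ (min p 2 - 1) ≤ ((1/(2 * KqC p)) ^ (1/(min p 2 - 1))) ^ (min p 2 - 1) :=
        Real.rpow_le_rpow hθ.le h7 hm1.le
      rwa [← Real.rpow_mul (by positivity), one_div_mul_cancel hm1.ne', Real.rpow_one] at h8
    have hθm : θ ^ (min p 2) = θ ^ (min p 2 - 1) * θ := by
      rw [← Real.rpow_add_one hθ.ne']
      congr 1
      ring
    have h9 : KqC p * θ ^ (min p 2) ≤ θ / 2 := by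
      rw [hθm]
      have := mul_le_mul_of_nonneg_right hθsm (le_of_lt hθ)
      calc KqC p * (θ ^ (min p 2 - 1) * θ) = KqC p * (θ ^ (min p 2 - 1) * θ) := rfl
        _ ≤ KqC p * (1 / (2 * KqC p) * θ) := by
            apply mul_le_mul_of_nonneg_left this hKq.le
        _ = θ / 2 := by field_simp
    linarith
  have hcoefm : ((cA p) ^ q * θ ^ p + (CA p) ^ q * θ ^ (2:ℝ)) * (s * t0) ≤
      θ / 2 * (s * t0) := mul_le_mul_of_nonneg_right hcoef (by positivity)
  have hst : s * (θ * t0) = θ * (s * t0) := by ring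
  calc θ / 2 * (s * t0) = θ * (s * t0) - θ / 2 * (s * t0) := by ring
    _ ≤ s * (θ * t0) - phiFun p δ (θ * t0) := by
        rw [hst]
        have := le_trans hphi hcoefm
        linarith
    _ ≤ conjFun (phiFun p δ) s := hkey
lemma conj_zero {p δ : ℝ} (hp : 1 < p) (hδ : 0 ≤ δ) : conjFun (phiFun p δ) 0 = 0 := by
  apply le_antisymm
  · apply Real.sSup_le
    · rintro x ⟨t, ht, rfl⟩
      simp only [zero_mul, zero_sub, neg_nonpos]
      exact phi_nonneg hδ ht
    · exact le_rfl
  · apply le_csSup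
    · refine ⟨0, ?_⟩
      rintro x ⟨t, ht, rfl⟩
      simp only [zero_mul, zero_sub, neg_nonpos]
      exact phi_nonneg hδ ht
    · refine ⟨0, Set.self_mem_Ici, ?_⟩
      simp [phiFun, intervalIntegral.integral_same]

/-- For `p ∈ (1,∞)` and `p' = p/(p−1)` there exist constants `c, C > 0` depending only
on `p` such that for all `δ ≥ 0` and all `t ≥ 0`,
`c·(δ^{p−1}+t)^{p'−2}·t² ≤ φ*(t) ≤ C·(δ^{p−1}+t)^{p'−2}·t²`; moreover there is `K`
depending only on `p` (with `K ≤ c'·2^{max{2,p'}}`) such that `φ*(2t) ≤ K·φ*(t)`. -/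
theorem conj_phi_equiv_and_Delta2 (p : ℝ) (hp : 1 < p) :
    ∃ c C K c' : ℝ, 0 < c ∧ 0 < C ∧ 0 < K ∧ 0 < c' ∧
      K ≤ c' * 2 ^ (max 2 (p / (p - 1))) ∧
      ∀ δ : ℝ, 0 ≤ δ → ∀ t : ℝ, 0 ≤ t →
        (c * (δ ^ (p - 1) + t) ^ (p / (p - 1) - 2) * t ^ 2 ≤ conjFun (phiFun p δ) t ∧
          conjFun (phiFun p δ) t ≤ C * (δ ^ (p - 1) + t) ^ (p / (p - 1) - 2) * t ^ 2) ∧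
        conjFun (phiFun p δ) (2 * t) ≤ K * conjFun (phiFun p δ) t := by
  have hp1 : 0 < p - 1 := by linarith
  have hexp : p / (p - 1) - 2 = (2 - p)/(p - 1) := by field_simp; ring
  have hθ := thet_pos (p := p)
  have hM := Mbig_pos (p := p)
  refine ⟨thet p / 2, Mbig p, (2 * Mbig p / thet p) * 2 ^ (max 2 (p / (p - 1))),
    2 * Mbig p / thet p, by positivity, hM, by positivity, by positivity, le_rfl, ?_⟩
  intro δ hδ t ht
  rcases eq_or_lt_of_le ht with h0 | hts
  · -- t = 0
    subst h0
    simp [conj_zero hp hδ]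
  · -- t > 0
    have ha0 : 0 ≤ δ ^ (p - 1) := Real.rpow_nonneg hδ _
    have has : 0 < δ ^ (p - 1) + t := by linarith
    set a := δ ^ (p - 1) with ha
    set e := (2 - p)/(p - 1) with he
    have hlow := conj_lower hp hδ hts
    have hup := conj_upper hp hδ hts
    have hlow' : thet p / 2 * (a + t) ^ (p / (p - 1) - 2) * t ^ 2 ≤
        conjFun (phiFun p δ) t := by
      rw [hexp]
      calc thet p / 2 * (a + t) ^ e * t ^ 2
          = thet p / 2 * (t * ((a + t) ^ e * t)) := by ring
        _ ≤ conjFun (phiFun p δ) t := hlow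
    have hup' : conjFun (phiFun p δ) t ≤
        Mbig p * (a + t) ^ (p / (p - 1) - 2) * t ^ 2 := by
      rw [hexp]
      calc conjFun (phiFun p δ) t ≤ Mbig p * (t * ((a + t) ^ e * t)) := hup
        _ = Mbig p * (a + t) ^ e * t ^ 2 := by ring
    refine ⟨⟨hlow', hup'⟩, ?_⟩
    -- Δ₂
    have h2t : (0:ℝ) < 2 * t := by linarith
    have hup2 := conj_upper (s := 2 * t) hp hδ h2t
    have hmax2 : (2:ℝ) ≤ max 2 (p / (p - 1)) := le_max_left _ _
    have hfac : (a + 2 * t) ^ e * (4 * t ^ 2) ≤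
        2 ^ (max 2 (p / (p - 1))) * ((a + t) ^ e * t ^ 2) := by
      have ht2 : (0:ℝ) ≤ t ^ 2 := sq_nonneg t
      rcases le_or_gt 0 e with hecase | hecase
      · have h1 : (a + 2 * t) ^ e ≤ (2 * (a + t)) ^ e :=
          Real.rpow_le_rpow (by linarith) (by linarith) hecase
        have h2 : (2 * (a + t)) ^ e = 2 ^ e * (a + t) ^ e :=
          Real.mul_rpow (by norm_num) has.le
        have h3 : (4:ℝ) * 2 ^ e = 2 ^ (e + 2) := by
          rw [Real.rpow_add two_pos, show ((2:ℝ) ^ (2:ℝ)) = 4 from by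
            rw [show (2:ℝ) = ((2:ℕ):ℝ) from by norm_num, Real.rpow_natCast]; norm_num]
          ring
        have h4 : e + 2 = p / (p - 1) := by rw [he]; field_simp; ring
        have h5 : (2:ℝ) ^ (e + 2) ≤ 2 ^ (max 2 (p / (p - 1))) := by
          apply Real.rpow_le_rpow_of_exponent_le one_le_two
          rw [h4]; exact le_max_right _ _
        calc (a + 2 * t) ^ e * (4 * t ^ 2) ≤ (2 ^ e * (a + t) ^ e) * (4 * t ^ 2) := by
              rw [← h2]
              exact mul_le_mul_of_nonneg_right h1 (by positivity)
          _ = (4 * 2 ^ e) * ((a + t) ^ e * t ^ 2) := by ring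
          _ ≤ 2 ^ (max 2 (p / (p - 1))) * ((a + t) ^ e * t ^ 2) := by
              rw [h3]
              apply mul_le_mul_of_nonneg_right h5
              positivity
      · have h1 : (a + 2 * t) ^ e ≤ (a + t) ^ e :=
          Real.rpow_le_rpow_of_nonpos has (by linarith) hecase.le
        have h5 : (4:ℝ) ≤ 2 ^ (max 2 (p / (p - 1))) := by
          calc (4:ℝ) = 2 ^ (2:ℝ) := by
                rw [show (2:ℝ) = ((2:ℕ):ℝ) from by norm_num, Real.rpow_natCast]; norm_num
            _ ≤ 2 ^ (max 2 (p / (p - 1))) :=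
                Real.rpow_le_rpow_of_exponent_le one_le_two hmax2
        calc (a + 2 * t) ^ e * (4 * t ^ 2) ≤ (a + t) ^ e * (4 * t ^ 2) :=
              mul_le_mul_of_nonneg_right h1 (by positivity)
          _ = 4 * ((a + t) ^ e * t ^ 2) := by ring
          _ ≤ 2 ^ (max 2 (p / (p - 1))) * ((a + t) ^ e * t ^ 2) := by
              apply mul_le_mul_of_nonneg_right h5
              have : (0:ℝ) ≤ (a + t) ^ e := Real.rpow_nonneg has.le _
              positivity
    calc conjFun (phiFun p δ) (2 * t)
        ≤ Mbig p * (2 * t * ((a + 2 * t) ^ e * (2 * t))) := hup2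
      _ = Mbig p * ((a + 2 * t) ^ e * (4 * t ^ 2)) := by ring
      _ ≤ Mbig p * (2 ^ (max 2 (p / (p - 1))) * ((a + t) ^ e * t ^ 2)) :=
          mul_le_mul_of_nonneg_left hfac hM.le
      _ = (2 * Mbig p / thet p) * 2 ^ (max 2 (p / (p - 1))) *
            (thet p / 2 * ((a + t) ^ e * t ^ 2)) := by
          field_simp
      _ ≤ (2 * Mbig p / thet p) * 2 ^ (max 2 (p / (p - 1))) * conjFun (phiFun p δ) t := by
          apply mul_le_mul_of_nonneg_left _ (by positivity)
          calc thet p / 2 * ((a + t) ^ e * t ^ 2)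
              = thet p / 2 * (t * ((a + t) ^ e * t)) := by ring
            _ ≤ conjFun (phiFun p δ) t := hlow
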